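/- Adversarial tightness: Suppose H is symmetric, Φ̃ is the supremum-based loss of Φ:ℝ→[0,∞), and there exists x∈X with H̄_γ(x) ≠ H. Define T̂₁(t) = inf{ΔC_{Φ̃,H}(h,x,t) : x∈X, h∈H̄_γ(x), H̄_γ(x) ⊊ H} and T̂₂(t) = inf{ΔC_{Φ̃,H}(h,x,(t+1)/2) : x∈X, h∈H, o_h(x)<0}; let T₁(t)=T̂₁(t) for t∈[1/2,1] and T₁(t)=2·T̂₁(1/2)·t for t∈[0,1/2), let T₂(t)=T̂₂(t) on [0,1], and set T_Φ̃ = min{T₁,T₂}. If T_Φ̃ is convex with T_Φ̃(0)=0 and T₂(t) ≤ T₁(t) for all t∈[0,1], then for every t∈[0,1] and every δ>0 there exist a distribution D over X×Y (a pair (μ,η)) and a hypothesis h∈H such that R_{ℓ_γ}(h) − R*_{ℓ_γ,H} + M_{ℓ_γ,H} = t and T_Φ̃(t) ≤ R_{Φ̃}(h) − R*_{Φ̃,H} + M_{Φ̃,H} ≤ T_Φ̃(t) + δ (all computed with respect to D). -/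
import Mathlib


open MeasureTheory Set
open scoped ENNReal

noncomputable section

/-- Conditional `ℓ`-risk of `h` at `x` with conditional probability level `t`. -/
def condRiskT {X : Type*} (ℓ : (X → ℝ) → X → ℝ → ℝ) (h : X → ℝ) (x : X) (t : ℝ) : ℝ :=
  t * ℓ h x 1 + (1 - t) * ℓ h x (-1)

/-- Conditional `ℓ`-risk of `h` at `x`. -/
def condRisk {X : Type*} (ℓ : (X → ℝ) → X → ℝ → ℝ) (η : X → ℝ) (h : X → ℝ) (x : X) : ℝ :=
  condRiskT ℓ h x (η x)

/-- Minimal conditional `ℓ`-risk over the hypothesis set `H` at `x`. -/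
def condRiskStar {X : Type*} (ℓ : (X → ℝ) → X → ℝ → ℝ) (η : X → ℝ) (H : Set (X → ℝ))
    (x : X) : ℝ :=
  sInf ((fun h => condRisk ℓ η h x) '' H)

/-- `ΔC_{ℓ,H}(h,x)`. -/
def deltaC {X : Type*} (ℓ : (X → ℝ) → X → ℝ → ℝ) (η : X → ℝ) (H : Set (X → ℝ))
    (h : X → ℝ) (x : X) : ℝ :=
  condRisk ℓ η h x - condRiskStar ℓ η H x

/-- `ΔC_{ℓ,H}(h,x,t)`. -/
def deltaCT {X : Type*} (ℓ : (X → ℝ) → X → ℝ → ℝ) (H : Set (X → ℝ))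
    (h : X → ℝ) (x : X) (t : ℝ) : ℝ :=
  condRiskT ℓ h x t - sInf ((fun h' => condRiskT ℓ h' x t) '' H)

/-- Generalization error `R_ℓ(h)` with respect to the input-space set `XS`. -/
def genErrS {X : Type*} [MeasurableSpace X] (μ : Measure X) (XS : Set X)
    (ℓ : (X → ℝ) → X → ℝ → ℝ) (η : X → ℝ) (h : X → ℝ) : ℝ :=
  ∫ x in XS, condRisk ℓ η h x ∂μ

/-- Best-in-class error `R*_{ℓ,H}`. -/
def bestErrS {X : Type*} [MeasurableSpace X] (μ : Measure X) (XS : Set X)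
    (ℓ : (X → ℝ) → X → ℝ → ℝ) (η : X → ℝ) (H : Set (X → ℝ)) : ℝ :=
  sInf ((fun h => genErrS μ XS ℓ η h) '' H)

/-- Minimizability gap `M_{ℓ,H}`. -/
def minGapS {X : Type*} [MeasurableSpace X] (μ : Measure X) (XS : Set X)
    (ℓ : (X → ℝ) → X → ℝ → ℝ) (η : X → ℝ) (H : Set (X → ℝ)) : ℝ :=
  bestErrS μ XS ℓ η H - ∫ x in XS, condRiskStar ℓ η H x ∂μ

/-- `ε`-truncation `⟨t⟩_ε = t · 1_{t > ε}`. -/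
def trunc (ε t : ℝ) : ℝ := if ε < t then t else 0

/-- `u_h(x) = inf_{‖x−x'‖ ≤ γ} h(x')`. -/
def uInf {E : Type*} [NormedAddCommGroup E] (γ : ℝ) (h : E → ℝ) (x : E) : ℝ :=
  sInf (h '' {x' | ‖x - x'‖ ≤ γ})

/-- `o_h(x) = sup_{‖x−x'‖ ≤ γ} h(x')`. -/
def oSup {E : Type*} [NormedAddCommGroup E] (γ : ℝ) (h : E → ℝ) (x : E) : ℝ :=
  sSup (h '' {x' | ‖x - x'‖ ≤ γ})

/-- The adversarial zero-one loss `ℓ_γ(h,x,y) = sup_{‖x−x'‖ ≤ γ} 1_{y·h(x') ≤ 0}`. -/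
def lossGamma {E : Type*} [NormedAddCommGroup E] (γ : ℝ) (h : E → ℝ) (x : E) (y : ℝ) : ℝ :=
  sSup ((fun x' => if y * h x' ≤ 0 then (1:ℝ) else 0) '' {x' | ‖x - x'‖ ≤ γ})

/-- The supremum-based loss `Φ̃(h,x,y) = sup_{‖x−x'‖ ≤ γ} Φ(y·h(x'))`. -/
def supLoss {E : Type*} [NormedAddCommGroup E] (γ : ℝ) (Φ : ℝ → ℝ)
    (h : E → ℝ) (x : E) (y : ℝ) : ℝ :=
  sSup ((fun x' => Φ (y * h x')) '' {x' | ‖x - x'‖ ≤ γ})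

/-- `H̄_γ(x) = {h ∈ H : u_h(x) ≤ 0 ≤ o_h(x)}`. -/
def Hbar {E : Type*} [NormedAddCommGroup E] (γ : ℝ) (H : Set (E → ℝ)) (x : E) :
    Set (E → ℝ) :=
  {h ∈ H | uInf γ h x ≤ 0 ∧ 0 ≤ oSup γ h x}

/-- A hypothesis set is symmetric when it is closed under negation. -/
def IsSymmetricHyp {E : Type*} (H : Set (E → ℝ)) : Prop :=
  ∀ h : E → ℝ, h ∈ H ↔ (fun x => -(h x)) ∈ H

end

section AuxTightness

open MeasureTheory Set

variable {E : Type*} [NormedAddCommGroup E]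

lemma aux_ball_nonempty (γ : ℝ) (hγ : 0 ≤ γ) (x : E) : {x' : E | ‖x - x'‖ ≤ γ}.Nonempty :=
  ⟨x, by simp [hγ]⟩

lemma aux_sSup_image_const_on {B : Set E} (hB : B.Nonempty) {f : E → ℝ} {c : ℝ}
    (h : ∀ b ∈ B, f b = c) : sSup (f '' B) = c := by
  rw [Set.image_congr h, hB.image_const, csSup_singleton]

lemma aux_supLoss_nonneg {γ : ℝ} (hγ : 0 ≤ γ) {Φ : ℝ → ℝ} (hΦ : ∀ t, 0 ≤ Φ t)
    (h : E → ℝ) (x : E) (y : ℝ) : 0 ≤ supLoss γ Φ h x y := by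
  by_cases hb : BddAbove ((fun x' => Φ (y * h x')) '' {x' | ‖x - x'‖ ≤ γ})
  · exact le_trans (hΦ (y * h x)) (le_csSup hb ⟨x, by simp [hγ], rfl⟩)
  · rw [supLoss, Real.sSup_of_not_bddAbove hb]

lemma aux_condRiskT_supLoss_nonneg {γ : ℝ} (hγ : 0 ≤ γ) {Φ : ℝ → ℝ} (hΦ : ∀ t, 0 ≤ Φ t)
    (h : E → ℝ) (x : E) {s : ℝ} (hs0 : 0 ≤ s) (hs1 : s ≤ 1) :
    0 ≤ condRiskT (supLoss γ Φ) h x s := by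
  have h1 := aux_supLoss_nonneg hγ hΦ h x 1
  have h2 := aux_supLoss_nonneg hγ hΦ h x (-1)
  unfold condRiskT
  nlinarith

lemma aux_lossGamma_eq_one {γ : ℝ} (hγ : 0 ≤ γ) {h : E → ℝ} {x : E} {y : ℝ}
    (hx : ∀ x', ‖x - x'‖ ≤ γ → y * h x' ≤ 0) : lossGamma γ h x y = 1 :=
  aux_sSup_image_const_on (aux_ball_nonempty γ hγ x) (fun b hb => if_pos (hx b hb))

lemma aux_lossGamma_eq_zero {γ : ℝ} (hγ : 0 ≤ γ) {h : E → ℝ} {x : E} {y : ℝ}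
    (hx : ∀ x', ‖x - x'‖ ≤ γ → ¬(y * h x' ≤ 0)) : lossGamma γ h x y = 0 :=
  aux_sSup_image_const_on (aux_ball_nonempty γ hγ x) (fun b hb => if_neg (hx b hb))

lemma aux_lossGamma_bddAbove (γ : ℝ) (h : E → ℝ) (x : E) (y : ℝ) :
    BddAbove ((fun x' => if y * h x' ≤ 0 then (1:ℝ) else 0) '' {x' | ‖x - x'‖ ≤ γ}) := by
  refine ⟨1, ?_⟩
  rintro _ ⟨b, _, rfl⟩
  dsimp only
  split <;> norm_num

lemma aux_lossGamma_nonneg {γ : ℝ} (hγ : 0 ≤ γ) (h : E → ℝ) (x : E) (y : ℝ) :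
    0 ≤ lossGamma γ h x y := by
  have hmem : (if y * h x ≤ 0 then (1:ℝ) else 0)
      ∈ ((fun x' => if y * h x' ≤ 0 then (1:ℝ) else 0) '' {x' | ‖x - x'‖ ≤ γ}) :=
    ⟨x, by simp [hγ], rfl⟩
  have := le_csSup (aux_lossGamma_bddAbove γ h x y) hmem
  have h0 : (0:ℝ) ≤ if y * h x ≤ 0 then (1:ℝ) else 0 := by split <;> norm_num
  exact le_trans h0 this

lemma aux_condRiskT_lossGamma_ge {γ : ℝ} (hγ : 0 ≤ γ) (h : E → ℝ) (x : E) {s : ℝ}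
    (hs : 1/2 ≤ s) (hs1 : s ≤ 1) : 1 - s ≤ condRiskT (lossGamma γ) h x s := by
  by_cases hc : ∃ x', ‖x - x'‖ ≤ γ ∧ h x' ≤ 0
  · obtain ⟨x', hx', hh⟩ := hc
    have h1 : (1:ℝ) ≤ lossGamma γ h x 1 := by
      refine le_csSup (aux_lossGamma_bddAbove γ h x 1) ⟨x', hx', ?_⟩
      simp [hh]
    have h2 := aux_lossGamma_nonneg hγ h x (-1)
    unfold condRiskT
    nlinarith
  · push_neg at hc
    have h1 : lossGamma γ h x (-1) = 1 := by
      refine aux_lossGamma_eq_one hγ (fun x' hx' => ?_)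
      have := hc x' hx'
      nlinarith
    have h2 := aux_lossGamma_nonneg hγ h x 1
    unfold condRiskT
    nlinarith

lemma aux_forall_lt_of_oSup_neg {γ : ℝ} {h : E → ℝ} {x : E} (ho : oSup γ h x < 0) :
    ∀ x', ‖x - x'‖ ≤ γ → h x' < 0 := by
  intro x' hx'
  have hb : BddAbove (h '' {x' | ‖x - x'‖ ≤ γ}) := by
    by_contra hb
    rw [oSup, Real.sSup_of_not_bddAbove hb] at ho
    linarith
  exact lt_of_le_of_lt (le_csSup hb ⟨x', hx', rfl⟩) ho

lemma aux_setIntegral_dirac_of_mem {α : Type*} [MeasurableSpace α]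
    [MeasurableSingletonClass α] (f : α → ℝ) {a : α} {s : Set α} (ha : a ∈ s) :
    ∫ x in s, f x ∂Measure.dirac a = f a := by
  classical
  rw [MeasureTheory.setIntegral_dirac f a s, if_pos ha]

end AuxTightness

open MeasureTheory Set in
/-- **Adversarial tightness** (Theorem 7). -/
theorem adversarial_tightness
    {d : ℕ} {p : ℝ≥0∞} [Fact (1 ≤ p)]
    [MeasurableSpace (PiLp p (fun _ : Fin d => ℝ))]
    [BorelSpace (PiLp p (fun _ : Fin d => ℝ))]
    (γ : ℝ) (hγ : 0 < γ)
    (XS : Set (PiLp p (fun _ : Fin d => ℝ))) (hXSne : XS.Nonempty)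
    (hXSmeas : MeasurableSet XS)
    (H : Set (PiLp p (fun _ : Fin d => ℝ) → ℝ)) (hHne : H.Nonempty)
    (hHmeas : ∀ h ∈ H, Measurable h)
    (hsym : IsSymmetricHyp H)
    (hexist : ∃ x ∈ XS, Hbar γ H x ≠ H)
    (Φ : ℝ → ℝ) (hΦpos : ∀ t, 0 ≤ Φ t)
    (That₁ That₂ T₁ T₂ TΦ : ℝ → ℝ)
    (hThat₁ : ∀ t : ℝ, That₁ t =
      sInf {r : ℝ | ∃ x ∈ XS, ∃ h, h ∈ Hbar γ H x ∧ Hbar γ H x ⊂ H ∧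
        r = deltaCT (supLoss γ Φ) H h x t})
    (hThat₂ : ∀ t : ℝ, That₂ t =
      sInf {r : ℝ | ∃ x ∈ XS, ∃ h ∈ H, oSup γ h x < 0 ∧
        r = deltaCT (supLoss γ Φ) H h x ((t + 1) / 2)})
    (hT₁ : ∀ t : ℝ, T₁ t = if (1/2 : ℝ) ≤ t then That₁ t else 2 * That₁ (1/2) * t)
    (hT₂ : ∀ t : ℝ, T₂ t = That₂ t)
    (hTΦ : ∀ t : ℝ, TΦ t = min (T₁ t) (T₂ t))
    (hTconv : ConvexOn ℝ (Icc (0:ℝ) 1) TΦ) (hT0 : TΦ 0 = 0)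
    (hT₂leT₁ : ∀ t ∈ Icc (0:ℝ) 1, T₂ t ≤ T₁ t) :
    ∀ t ∈ Icc (0:ℝ) 1, ∀ δ : ℝ, 0 < δ →
      ∃ μ : Measure (PiLp p (fun _ : Fin d => ℝ)), IsProbabilityMeasure μ ∧ μ XS = 1 ∧
      ∃ η : PiLp p (fun _ : Fin d => ℝ) → ℝ, Measurable η ∧ (∀ x, η x ∈ Icc (0:ℝ) 1) ∧
      ∃ h ∈ H,
        genErrS μ XS (lossGamma γ) η h - bestErrS μ XS (lossGamma γ) η H
          + minGapS μ XS (lossGamma γ) η H = t ∧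
        TΦ t ≤ genErrS μ XS (supLoss γ Φ) η h - bestErrS μ XS (supLoss γ Φ) η H
                + minGapS μ XS (supLoss γ Φ) η H ∧
        genErrS μ XS (supLoss γ Φ) η h - bestErrS μ XS (supLoss γ Φ) η H
                + minGapS μ XS (supLoss γ Φ) η H ≤ TΦ t + δ := by
  classical
  intro t ht δ hδ
  set s : ℝ := (t + 1) / 2 with hsdef
  have hs2 : (1/2 : ℝ) ≤ s := by rw [hsdef]; linarith [ht.1]
  have hs1 : s ≤ 1 := by rw [hsdef]; linarith [ht.2]
  have hs0 : (0:ℝ) ≤ s := by linarith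
  -- the set defining T̂₂ t
  set S : Set ℝ := {r : ℝ | ∃ x ∈ XS, ∃ h ∈ H, oSup γ h x < 0 ∧
      r = deltaCT (supLoss γ Φ) H h x ((t + 1) / 2)} with hSdef
  -- S is nonempty
  obtain ⟨x₀, hx₀XS, hx₀⟩ := hexist
  have hHbarsub : Hbar γ H x₀ ⊆ H := fun g hg => hg.1
  have hgex : ∃ g ∈ H, g ∉ Hbar γ H x₀ := by
    by_contra hco
    push_neg at hco
    exact hx₀ (Set.Subset.antisymm hHbarsub hco)
  obtain ⟨g, hgH, hgn⟩ := hgex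
  have hg' : ¬(uInf γ g x₀ ≤ 0 ∧ 0 ≤ oSup γ g x₀) := fun hco => hgn ⟨hgH, hco⟩
  have hSne : S.Nonempty := by
    rcases le_or_gt (uInf γ g x₀) 0 with hu | hu
    · have ho : oSup γ g x₀ < 0 := by
        by_contra hoc
        push_neg at hoc
        exact hg' ⟨hu, hoc⟩
      exact ⟨deltaCT (supLoss γ Φ) H g x₀ ((t + 1) / 2), x₀, hx₀XS, g, hgH, ho, rfl⟩
    · -- uInf > 0 : use -g
      have hbdd : BddBelow (g '' {x' | ‖x₀ - x'‖ ≤ γ}) := by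
        by_contra hb
        rw [uInf, Real.sInf_of_not_bddBelow hb] at hu
        linarith
      have hlow : ∀ x', ‖x₀ - x'‖ ≤ γ → uInf γ g x₀ ≤ g x' := fun x' hx' =>
        csInf_le hbdd ⟨x', hx', rfl⟩
      have ho : oSup γ (fun y => -(g y)) x₀ < 0 := by
        have hne' : ((fun y => -(g y)) '' {x' | ‖x₀ - x'‖ ≤ γ}).Nonempty :=
          (aux_ball_nonempty γ hγ.le x₀).image _
        have hle : oSup γ (fun y => -(g y)) x₀ ≤ -(uInf γ g x₀) := by
          refine csSup_le hne' ?_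
          rintro _ ⟨x', hx', rfl⟩
          have := hlow x' hx'
          dsimp only
          linarith
        linarith
      exact ⟨deltaCT (supLoss γ Φ) H (fun y => -(g y)) x₀ ((t + 1) / 2), x₀, hx₀XS,
        fun y => -(g y), (hsym g).1 hgH, ho, rfl⟩
  -- S is bounded below by 0
  have hSlb : ∀ r ∈ S, (0:ℝ) ≤ r := by
    rintro r ⟨x, hxXS, h, hhH, ho, rfl⟩
    unfold deltaCT
    have hlb : ∀ v ∈ ((fun h' => condRiskT (supLoss γ Φ) h' x ((t+1)/2)) '' H), (0:ℝ) ≤ v := by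
      rintro v ⟨h', _, rfl⟩
      exact aux_condRiskT_supLoss_nonneg hγ.le hΦpos h' x hs0 hs1
    have h1 : sInf ((fun h' => condRiskT (supLoss γ Φ) h' x ((t+1)/2)) '' H)
        ≤ condRiskT (supLoss γ Φ) h x ((t+1)/2) := csInf_le ⟨0, hlb⟩ ⟨h, hhH, rfl⟩
    have h2 := aux_condRiskT_supLoss_nonneg hγ.le hΦpos h x hs0 hs1
    linarith
  -- pick an almost-minimizer
  obtain ⟨r, hrS, hrlt⟩ := Real.lt_sInf_add_pos hSne hδ
  obtain ⟨x, hxXS, h, hhH, hho, hreq⟩ := hrS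
  -- the construction
  refine ⟨Measure.dirac x, inferInstance, ?_, fun _ => s, measurable_const,
    fun _ => ⟨hs0, hs1⟩, h, hhH, ?_, ?_, ?_⟩
  · simp [Measure.dirac_apply, hxXS]
  · -- adversarial 0-1 part
    have hgen : ∀ h' : PiLp p (fun _ : Fin d => ℝ) → ℝ, genErrS (Measure.dirac x) XS (lossGamma γ) (fun _ => s) h'
        = condRisk (lossGamma γ) (fun _ => s) h' x :=
      fun h' => aux_setIntegral_dirac_of_mem _ hxXS
    have hbest : bestErrS (Measure.dirac x) XS (lossGamma γ) (fun _ => s) H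
        = condRiskStar (lossGamma γ) (fun _ => s) H x := by
      unfold bestErrS condRiskStar
      rw [Set.image_congr (fun h' _ => hgen h')]
    have hgap : minGapS (Measure.dirac x) XS (lossGamma γ) (fun _ => s) H = 0 := by
      unfold minGapS
      rw [hbest, aux_setIntegral_dirac_of_mem _ hxXS, sub_self]
    -- pointwise values
    have hneg := aux_forall_lt_of_oSup_neg hho
    have hval1 : lossGamma γ h x 1 = 1 :=
      aux_lossGamma_eq_one hγ.le (fun x' hx' => by nlinarith [hneg x' hx'])
    have hval2 : lossGamma γ h x (-1) = 0 :=
      aux_lossGamma_eq_zero hγ.le (fun x' hx' => by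
        simp only [not_le]
        nlinarith [hneg x' hx'])
    have hrisk : condRisk (lossGamma γ) (fun _ => s) h x = s := by
      unfold condRisk condRiskT
      rw [hval1, hval2]; ring
    -- the negated hypothesis attains 1 - s
    have hval3 : lossGamma γ (fun y => -(h y)) x 1 = 0 :=
      aux_lossGamma_eq_zero hγ.le (fun x' hx' => by
        have := hneg x' hx'
        simp only [not_le]
        nlinarith)
    have hval4 : lossGamma γ (fun y => -(h y)) x (-1) = 1 :=
      aux_lossGamma_eq_one hγ.le (fun x' hx' => by nlinarith [hneg x' hx'])
    have hriskneg : condRisk (lossGamma γ) (fun _ => s) (fun y => -(h y)) x = 1 - s := by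
      unfold condRisk condRiskT
      rw [hval3, hval4]; ring
    have hstar : condRiskStar (lossGamma γ) (fun _ => s) H x = 1 - s := by
      unfold condRiskStar
      have hlb : ∀ v ∈ ((fun h' => condRisk (lossGamma γ) (fun _ => s) h' x) '' H),
          (1:ℝ) - s ≤ v := by
        rintro v ⟨h', _, rfl⟩
        exact aux_condRiskT_lossGamma_ge hγ.le h' x hs2 hs1
      refine le_antisymm (csInf_le ⟨1 - s, hlb⟩ ⟨fun y => -(h y), (hsym h).1 hhH, hriskneg⟩)
        (le_csInf ⟨_, ⟨h, hhH, rfl⟩⟩ hlb)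
    rw [hgen, hbest, hgap, hrisk, hstar, hsdef]
    ring
  · -- supLoss lower bound
    have hgen : ∀ h' : PiLp p (fun _ : Fin d => ℝ) → ℝ, genErrS (Measure.dirac x) XS (supLoss γ Φ) (fun _ => s) h'
        = condRisk (supLoss γ Φ) (fun _ => s) h' x :=
      fun h' => aux_setIntegral_dirac_of_mem _ hxXS
    have hbest : bestErrS (Measure.dirac x) XS (supLoss γ Φ) (fun _ => s) H
        = condRiskStar (supLoss γ Φ) (fun _ => s) H x := by
      unfold bestErrS condRiskStar
      rw [Set.image_congr (fun h' _ => hgen h')]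
    have hgap : minGapS (Measure.dirac x) XS (supLoss γ Φ) (fun _ => s) H = 0 := by
      unfold minGapS
      rw [hbest, aux_setIntegral_dirac_of_mem _ hxXS, sub_self]
    have hdelta : condRisk (supLoss γ Φ) (fun _ => s) h x
        - condRiskStar (supLoss γ Φ) (fun _ => s) H x
        = deltaCT (supLoss γ Φ) H h x ((t + 1) / 2) := rfl
    have hTt : TΦ t = sInf S := by
      rw [hTΦ t, min_eq_right (hT₂leT₁ t ht), hT₂ t, hThat₂ t]
    rw [hgen, hbest, hgap, add_zero, hdelta, ← hreq, hTt]
    exact csInf_le ⟨0, hSlb⟩ ⟨x, hxXS, h, hhH, hho, hreq⟩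
  · -- supLoss upper bound
    have hgen : ∀ h' : PiLp p (fun _ : Fin d => ℝ) → ℝ, genErrS (Measure.dirac x) XS (supLoss γ Φ) (fun _ => s) h'
        = condRisk (supLoss γ Φ) (fun _ => s) h' x :=
      fun h' => aux_setIntegral_dirac_of_mem _ hxXS
    have hbest : bestErrS (Measure.dirac x) XS (supLoss γ Φ) (fun _ => s) H
        = condRiskStar (supLoss γ Φ) (fun _ => s) H x := by
      unfold bestErrS condRiskStar
      rw [Set.image_congr (fun h' _ => hgen h')]
    have hgap : minGapS (Measure.dirac x) XS (supLoss γ Φ) (fun _ => s) H = 0 := by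
      unfold minGapS
      rw [hbest, aux_setIntegral_dirac_of_mem _ hxXS, sub_self]
    have hdelta : condRisk (supLoss γ Φ) (fun _ => s) h x
        - condRiskStar (supLoss γ Φ) (fun _ => s) H x
        = deltaCT (supLoss γ Φ) H h x ((t + 1) / 2) := rfl
    have hTt : TΦ t = sInf S := by
      rw [hTΦ t, min_eq_right (hT₂leT₁ t ht), hT₂ t, hThat₂ t]
    rw [hgen, hbest, hgap, add_zero, hdelta, ← hreq, hTt]
    linarith
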